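/- Let P⁺ be a Sylow 2-subgroup of A_n with n ≥ 6, and let Q⁺ ≤ P⁺ be a subgroup of index at most 2 in P⁺. Then Q⁺ contains a product of two disjoint transpositions. -/

import Mathlib

open Equiv Subgroup Pointwise

private lemma swap_disj_commute {α : Type*} [DecidableEq α] {a b c d : α}
    (hac : a ≠ c) (had : a ≠ d) (hbc : b ≠ c) (hbd : b ≠ d) :
    Commute (Equiv.swap a b) (Equiv.swap c d) := by
  apply Equiv.Perm.Disjoint.commute
  intro x
  by_cases hxa : x = a
  · right; subst hxa; exact swap_apply_of_ne_of_ne hac had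
  by_cases hxb : x = b
  · right; subst hxb; exact swap_apply_of_ne_of_ne hbc hbd
  · left; exact swap_apply_of_ne_of_ne hxa hxb

private lemma conj_double_swap {α : Type*} [DecidableEq α] (g : Equiv.Perm α) (a b c d : α) :
    g * (Equiv.swap a b * Equiv.swap c d) * g⁻¹ =
      Equiv.swap (g a) (g b) * Equiv.swap (g c) (g d) := by
  rw [swap_apply_apply, swap_apply_apply]
  group

theorem stmt_12 (n : ℕ) (hn : 6 ≤ n)
    (P : Sylow 2 (alternatingGroup (Fin n)))
    (Q : Subgroup (alternatingGroup (Fin n))) (hQP : Q ≤ (P : Subgroup (alternatingGroup (Fin n))))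
    (hindex : Q.relIndex (P : Subgroup (alternatingGroup (Fin n))) ≤ 2) :
    ∃ g ∈ Q, ∃ a b c d : Fin n, a ≠ b ∧ c ≠ d ∧ a ≠ c ∧ a ≠ d ∧ b ≠ c ∧ b ≠ d ∧
      (g : Equiv.Perm (Fin n)) = Equiv.swap a b * Equiv.swap c d := by
  classical
  -- six distinct points
  set i0 : Fin n := ⟨0, by omega⟩
  set i1 : Fin n := ⟨1, by omega⟩
  set i2 : Fin n := ⟨2, by omega⟩
  set i3 : Fin n := ⟨3, by omega⟩
  set i4 : Fin n := ⟨4, by omega⟩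
  set i5 : Fin n := ⟨5, by omega⟩
  have ne01 : i0 ≠ i1 := Fin.ne_of_val_ne (by norm_num)
  have ne02 : i0 ≠ i2 := Fin.ne_of_val_ne (by norm_num)
  have ne03 : i0 ≠ i3 := Fin.ne_of_val_ne (by norm_num)
  have ne04 : i0 ≠ i4 := Fin.ne_of_val_ne (by norm_num)
  have ne05 : i0 ≠ i5 := Fin.ne_of_val_ne (by norm_num)
  have ne12 : i1 ≠ i2 := Fin.ne_of_val_ne (by norm_num)
  have ne13 : i1 ≠ i3 := Fin.ne_of_val_ne (by norm_num)
  have ne14 : i1 ≠ i4 := Fin.ne_of_val_ne (by norm_num)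
  have ne15 : i1 ≠ i5 := Fin.ne_of_val_ne (by norm_num)
  have ne23 : i2 ≠ i3 := Fin.ne_of_val_ne (by norm_num)
  have ne24 : i2 ≠ i4 := Fin.ne_of_val_ne (by norm_num)
  have ne25 : i2 ≠ i5 := Fin.ne_of_val_ne (by norm_num)
  have ne34 : i3 ≠ i4 := Fin.ne_of_val_ne (by norm_num)
  have ne35 : i3 ≠ i5 := Fin.ne_of_val_ne (by norm_num)
  have ne45 : i4 ≠ i5 := Fin.ne_of_val_ne (by norm_num)
  set A : Equiv.Perm (Fin n) := Equiv.swap i0 i1 with hA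
  set B : Equiv.Perm (Fin n) := Equiv.swap i2 i3 with hB
  set C : Equiv.Perm (Fin n) := Equiv.swap i4 i5 with hC
  have hAB : Commute A B := swap_disj_commute ne02 ne03 ne12 ne13
  have hAC : Commute A C := swap_disj_commute ne04 ne05 ne14 ne15
  have hBC : Commute B C := swap_disj_commute ne24 ne25 ne34 ne35
  have hA2 : A * A = 1 := Equiv.swap_mul_self _ _
  have hB2 : B * B = 1 := Equiv.swap_mul_self _ _
  have hC2 : C * C = 1 := Equiv.swap_mul_self _ _
  -- elements of the alternating group
  have memAB : A * B ∈ alternatingGroup (Fin n) := by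
    rw [Equiv.Perm.mem_alternatingGroup, map_mul, hA, hB,
      Equiv.Perm.sign_swap ne01, Equiv.Perm.sign_swap ne23]
    norm_num
  have memBC : B * C ∈ alternatingGroup (Fin n) := by
    rw [Equiv.Perm.mem_alternatingGroup, map_mul, hB, hC,
      Equiv.Perm.sign_swap ne23, Equiv.Perm.sign_swap ne45]
    norm_num
  set x : alternatingGroup (Fin n) := ⟨A * B, memAB⟩ with hx
  set y : alternatingGroup (Fin n) := ⟨B * C, memBC⟩ with hy
  have hx2 : x * x = 1 := by
    apply Subtype.ext
    show A * B * (A * B) = 1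
    rw [mul_assoc, ← mul_assoc B A, ← hAB.eq, mul_assoc, ← mul_assoc, hA2, one_mul, hB2]
  have hy2 : y * y = 1 := by
    apply Subtype.ext
    show B * C * (B * C) = 1
    rw [mul_assoc, ← mul_assoc C B, ← hBC.eq, mul_assoc, ← mul_assoc, hB2, one_mul, hC2]
  have hxyAC : ((x * y : alternatingGroup (Fin n)) : Equiv.Perm (Fin n)) = A * C := by
    show A * B * (B * C) = A * C
    rw [mul_assoc, ← mul_assoc B B, hB2, one_mul]
  have hcommP : Commute (A * B) (B * C) :=
    ((hAB.mul_right hAC).mul_left ((Commute.refl B).mul_right hBC))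
  have hcomm : y * x = x * y := Subtype.ext hcommP.eq.symm
  set K₀ : Subgroup (alternatingGroup (Fin n)) := Subgroup.closure {x, y} with hK₀
  have hxK : x ∈ K₀ := Subgroup.subset_closure (by simp)
  have hyK : y ∈ K₀ := Subgroup.subset_closure (by simp)
  -- auxiliary rewriting lemmas
  have hxx : ∀ c, x * (x * c) = c := fun c => by rw [← mul_assoc, hx2, one_mul]
  have hyy : ∀ c, y * (y * c) = c := fun c => by rw [← mul_assoc, hy2, one_mul]
  have hyxc : ∀ c, y * (x * c) = x * (y * c) := fun c => by
    rw [← mul_assoc, hcomm, mul_assoc]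
  have hxy2 : (x * y) * (x * y) = 1 := by
    rw [mul_assoc, hyxc, hxx, hy2]
  -- characterization of K₀
  have hchar : ∀ h ∈ K₀, h = 1 ∨ h = x ∨ h = y ∨ h = x * y := by
    intro h hh
    induction hh using Subgroup.closure_induction with
    | mem z hz =>
      rcases hz with rfl | rfl
      · exact Or.inr (Or.inl rfl)
      · exact Or.inr (Or.inr (Or.inl rfl))
    | one => exact Or.inl rfl
    | mul a b _ _ ha hb =>
      rcases ha with rfl | rfl | rfl | rfl <;> rcases hb with rfl | rfl | rfl | rfl <;>
        simp [mul_assoc, hx2, hy2, hxx, hyy, hyxc, hcomm]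
    | inv a _ ha =>
      rcases ha with rfl | rfl | rfl | rfl <;>
        simp [inv_eq_of_mul_eq_one_right hx2, inv_eq_of_mul_eq_one_right hy2,
          inv_eq_of_mul_eq_one_right hxy2, mul_assoc, hx2, hy2, hxx, hyy, hyxc, hcomm]
  -- distinctness of 1, x, y
  have hABi0 : (A * B) i0 = i1 := by
    rw [Equiv.Perm.mul_apply, hB, hA, swap_apply_of_ne_of_ne ne02 ne03, swap_apply_left]
  have hx_ne_one : x ≠ 1 := by
    intro h
    have h' : A * B = 1 := by
      have := congrArg Subtype.val h
      exact this
    rw [h'] at hABi0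
    exact ne01 hABi0
  have hy_ne_one : y ≠ 1 := by
    intro h
    have h' : B * C = 1 := by
      have := congrArg Subtype.val h
      exact this
    have : (B * C) i2 = i2 := by rw [h']; rfl
    rw [Equiv.Perm.mul_apply, hC, hB, swap_apply_of_ne_of_ne ne24 ne25,
      swap_apply_left] at this
    exact ne23 this.symm
  have hx_ne_y : x ≠ y := by
    intro h
    have h' : A * B = B * C := congrArg Subtype.val h
    have : (B * C) i0 = i0 := by
      rw [Equiv.Perm.mul_apply, hC, hB, swap_apply_of_ne_of_ne ne04 ne05,
        swap_apply_of_ne_of_ne ne02 ne03]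
    rw [← h', hABi0] at this
    exact ne01 this.symm
  -- K₀ is a 2-group
  have hp2 : IsPGroup 2 K₀ := by
    intro g
    refine ⟨1, ?_⟩
    rw [pow_one, sq]
    apply Subtype.ext
    rw [Subgroup.coe_mul, OneMemClass.coe_one]
    rcases hchar (g : alternatingGroup (Fin n)) g.2 with h | h | h | h <;> rw [h]
    · exact one_mul 1
    · exact hx2
    · exact hy2
    · exact hxy2
  obtain ⟨R, hR⟩ := hp2.exists_le_sylow
  obtain ⟨g, hg⟩ := MulAction.exists_smul_eq (alternatingGroup (Fin n)) R P
  set K : Subgroup (alternatingGroup (Fin n)) := MulAut.conj g • K₀ with hK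
  have hKP : K ≤ (P : Subgroup (alternatingGroup (Fin n))) := by
    have h1 : MulAut.conj g • K₀ ≤ MulAut.conj g • R.toSubgroup :=
      (Subgroup.pointwise_smul_le_pointwise_smul_iff).mpr hR
    have h2 : MulAut.conj g • R.toSubgroup = (P : Subgroup (alternatingGroup (Fin n))) := by
      rw [← Sylow.coe_subgroup_smul, hg]
    rw [hK]
    rw [h2] at h1
    exact h1
  have hrel0 : Q.relIndex (P : Subgroup (alternatingGroup (Fin n))) ≠ 0 :=
    Subgroup.index_ne_zero_of_finite
  have hrK : Q.relIndex K ≤ 2 :=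
    le_trans (Subgroup.relIndex_le_of_le_right hKP hrel0) hindex
  -- card K ≥ 3
  have hcardK₀ : 3 ≤ Nat.card K₀ := by
    have h1xy : (1 : alternatingGroup (Fin n)) ∉ ({x, y} : Set (alternatingGroup (Fin n))) := by
      intro h
      rcases h with h | h
      · exact hx_ne_one h.symm
      · exact hy_ne_one h.symm
    have h3 : ({1, x, y} : Set (alternatingGroup (Fin n))).ncard = 3 := by
      rw [Set.ncard_insert_of_notMem h1xy, Set.ncard_pair hx_ne_y]
    have hsub : ({1, x, y} : Set (alternatingGroup (Fin n))) ⊆ (K₀ : Set _) := by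
      intro z hz
      rcases hz with rfl | rfl | rfl
      · exact one_mem _
      · exact hxK
      · exact hyK
    have hle : ({1, x, y} : Set (alternatingGroup (Fin n))).ncard ≤ (K₀ : Set _).ncard :=
      Set.ncard_le_ncard hsub (Set.toFinite _)
    rw [h3] at hle
    rwa [← Nat.card_coe_set_eq] at hle
  have hcardK : 3 ≤ Nat.card K := by
    have h4 := Nat.card_congr (Subgroup.equivSMul (MulAut.conj g) K₀).toEquiv
    rw [← hK] at h4
    omega
  -- (Q ⊓ K) is nontrivial
  have hlag : Nat.card (Q.subgroupOf K) * Q.relIndex K = Nat.card K :=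
    Subgroup.card_mul_index (Q.subgroupOf K)
  have hnt : 2 ≤ Nat.card (Q.subgroupOf K) := by
    by_contra hc
    push_neg at hc
    have hc1 : Nat.card (Q.subgroupOf K) ≤ 1 := by omega
    have : Nat.card K ≤ 2 := by
      calc Nat.card K = Nat.card (Q.subgroupOf K) * Q.relIndex K := hlag.symm
        _ ≤ 1 * 2 := Nat.mul_le_mul hc1 hrK
        _ = 2 := by norm_num
    omega
  have : Nontrivial (Q.subgroupOf K) := Finite.one_lt_card_iff_nontrivial.mp (by omega)
  obtain ⟨u, huQ, hune⟩ := (Subgroup.nontrivial_iff_exists_ne_one (Q.subgroupOf K)).mp this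
  -- u : ↥K, u ∈ Q.subgroupOf K, (u : K) ≠ 1
  set h : alternatingGroup (Fin n) := (u : alternatingGroup (Fin n)) with hh
  have hhQ : h ∈ Q := Subgroup.mem_subgroupOf.mp huQ
  have hhK : h ∈ K := u.2
  have hhne : h ≠ 1 := fun e => hune (Subtype.ext e)
  -- extract the conjugated element
  rw [hK, Subgroup.mem_pointwise_smul_iff_inv_smul_mem] at hhK
  have hkK₀ : g⁻¹ * h * g ∈ K₀ := by
    have h1 : (MulAut.conj g)⁻¹ • h = g⁻¹ * h * g := by
      simp [MulAut.smul_def, mul_assoc]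
    rwa [h1] at hhK
  set k : alternatingGroup (Fin n) := g⁻¹ * h * g with hk
  have hkne : k ≠ 1 := by
    intro hk1
    apply hhne
    have h2 : h = g * k * g⁻¹ := by rw [hk]; group
    rw [hk1] at h2
    simpa using h2
  have hhk : h = g * k * g⁻¹ := by rw [hk]; group
  have hkchar := hchar k hkK₀
  -- k is x, y, or x*y; in each case its underlying perm is a double transposition on known points
  have hmain : ∃ a b c d : Fin n, a ≠ b ∧ c ≠ d ∧ a ≠ c ∧ a ≠ d ∧ b ≠ c ∧ b ≠ d ∧
      (k : Equiv.Perm (Fin n)) = Equiv.swap a b * Equiv.swap c d := by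
    rcases hkchar with h1 | h1 | h1 | h1
    · exact absurd h1 hkne
    · exact ⟨i0, i1, i2, i3, ne01, ne23, ne02, ne03, ne12, ne13, by rw [h1]⟩
    · exact ⟨i2, i3, i4, i5, ne23, ne45, ne24, ne25, ne34, ne35, by rw [h1]⟩
    · exact ⟨i0, i1, i4, i5, ne01, ne45, ne04, ne05, ne14, ne15, by rw [h1]; exact hxyAC⟩
  obtain ⟨a, b, c, d, nab, ncd, nac, nad, nbc, nbd, hkeq⟩ := hmain
  refine ⟨h, hhQ, (g : Equiv.Perm (Fin n)) a, (g : Equiv.Perm (Fin n)) b,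
    (g : Equiv.Perm (Fin n)) c, (g : Equiv.Perm (Fin n)) d,
    fun e => nab ((g : Equiv.Perm (Fin n)).injective e),
    fun e => ncd ((g : Equiv.Perm (Fin n)).injective e),
    fun e => nac ((g : Equiv.Perm (Fin n)).injective e),
    fun e => nad ((g : Equiv.Perm (Fin n)).injective e),
    fun e => nbc ((g : Equiv.Perm (Fin n)).injective e),
    fun e => nbd ((g : Equiv.Perm (Fin n)).injective e), ?_⟩
  have : (h : Equiv.Perm (Fin n)) =
      (g : Equiv.Perm (Fin n)) * (k : Equiv.Perm (Fin n)) * (g : Equiv.Perm (Fin n))⁻¹ := by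
    rw [hhk]; push_cast; ring_nf
  rw [this, hkeq]
  exact conj_double_swap _ a b c d
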